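/- Fix μ a positive integer and let a function g(y) = c[(y^μ + y^{−μ}) + μ λ^{−k}(λ^k − y)(y^μ − y^{−μ}) − 2cos(2πkμ/n)] where λ = exp(2πi/n), λ^k ≠ 1 or c arbitrary. Then G(y) = λ^k y g(y)/(y − λ^k)² is a Laurent polynomial in y, i.e. (y − λ^k)² divides y·g(y) in ℂ[y, y^{−1}]; moreover G has highest degree ≤ μ and lowest degree ≥ 1 − μ. -/

import Mathlib

open Complex

open Polynomial in
/-- For μ a positive integer (n ∤ μ), λ = exp(2πi/n), 0 ≤ k < n and
g(y) = c[(y^μ + y^{-μ}) + μλ^{-k}(λ^k - y)(y^μ - y^{-μ}) - 2cos(2πkμ/n)],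
the function G(y) = λ^k y g(y)/(y - λ^k)² is a Laurent polynomial in y with
highest degree ≤ μ and lowest degree ≥ 1 - μ. -/
theorem stmt_8 (m n : ℕ) (hn : n = 2 * m + 1) (μ : ℤ) (hμ : 0 < μ)
    (hnμ : ¬ (n : ℤ) ∣ μ) (k : ℕ) (hk : k < n) (c : ℂ)
    (lam : ℂ) (hlam : lam = Complex.exp (2 * Real.pi * I / n))
    (g : ℂ → ℂ)
    (hg : ∀ y : ℂ, y ≠ 0 → g y =
      c * ((y ^ μ + y ^ (-μ))
        + (μ : ℂ) * lam ^ (-(k : ℤ)) * (lam ^ (k : ℤ) - y) * (y ^ μ - y ^ (-μ))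
        - 2 * Complex.cos (2 * Real.pi * k * μ / n))) :
    ∃ β : ℤ → ℂ,
      (∀ ℓ : ℤ, (μ < ℓ ∨ ℓ < 1 - μ) → β ℓ = 0) ∧
      ∀ y : ℂ, y ≠ 0 → y ≠ lam ^ (k : ℤ) →
        lam ^ (k : ℤ) * y * g y / (y - lam ^ (k : ℤ)) ^ 2 =
          ∑ ℓ ∈ Finset.Icc (1 - μ) μ, β ℓ * y ^ ℓ := by
  have hn0 : (n : ℂ) ≠ 0 := by
    exact_mod_cast Nat.cast_ne_zero.mpr (by omega)
  have hlam0 : lam ≠ 0 := by rw [hlam]; exact Complex.exp_ne_zero _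
  set a : ℂ := lam ^ (k : ℤ) with ha
  have ha0 : a ≠ 0 := zpow_ne_zero _ hlam0
  obtain ⟨M', hM'⟩ : ∃ M' : ℕ, μ = (M' : ℤ) + 1 :=
    ⟨(μ - 1).toNat, by omega⟩
  set M : ℕ := M' + 1 with hMdef
  have hM : (M : ℤ) = μ := by simp [hMdef, hM']
  have hμM : (μ : ℂ) = (M : ℂ) := by
    rw [← hM]; push_cast; ring
  set θ : ℂ := 2 * (Real.pi : ℂ) * k * μ / n with hθ
  -- a^M = exp of the right thing
  have hb : a ^ M = Complex.exp (θ * I) := by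
    rw [ha, hlam, ← zpow_natCast _ M, ← zpow_mul, ← Complex.exp_int_mul]
    congr 1
    rw [hθ, ← hM]
    push_cast
    field_simp
  have hinv : Complex.exp (-θ * I) * a ^ M = 1 := by
    rw [neg_mul, hb, ← Complex.exp_add, neg_add_cancel, Complex.exp_zero]
  have key : a ^ M * a ^ M + 1 = 2 * Complex.cos θ * a ^ M := by
    rw [Complex.two_cos, add_mul, hinv, hb]
  -- The polynomial P
  set P : ℂ[X] := C (a * c) * (X ^ (2 * M) + 1
      + C ((M : ℂ) * a⁻¹) * (C a - X) * (X ^ (2 * M) - 1)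
      - C (2 * Complex.cos θ) * X ^ M) with hPdef
  have hroot : P.IsRoot a := by
    simp only [IsRoot, hPdef, eval_mul, eval_add, eval_sub, eval_pow, eval_C, eval_X, eval_one]
    rw [sub_self]
    have e : a ^ (2 * M) = a ^ M * a ^ M := by rw [two_mul, pow_add]
    rw [e]
    linear_combination (a * c) * key
  have hroot' : (Polynomial.derivative P).IsRoot a := by
    simp only [hPdef, derivative_mul, derivative_C, derivative_add, derivative_sub,
      derivative_pow, derivative_X, derivative_one, IsRoot, eval_mul, eval_add, eval_sub,
      eval_pow, eval_C, eval_X, eval_one, eval_mul, eval_natCast, eval_zero]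
    have r1 : a ^ (2 * M - 1) = a ^ M' * a ^ M' * a := by
      rw [show 2 * M - 1 = M' + (M' + 1) from by omega, pow_add, pow_succ]; ring
    have r2 : a ^ (M - 1) = a ^ M' := by
      rw [show M - 1 = M' from by omega]
    have r3 : a ^ (2 * M) = a ^ M' * a ^ M' * a * a := by
      rw [show 2 * M = M' + M' + 1 + 1 from by omega, pow_succ, pow_succ, pow_add]
    have r4 : a ^ (M' * 2) = a ^ M' * a ^ M' := by
      rw [show M' * 2 = M' + M' from by omega, pow_add]
    have keyM : (a ^ M' * a) * (a ^ M' * a) + 1 = 2 * Complex.cos θ * (a ^ M' * a) := by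
      rw [← pow_succ, ← hMdef]; exact key
    have hMne : (M : ℂ) ≠ 0 := by
      exact Nat.cast_ne_zero.mpr (by omega)
    field_simp
    rw [r1, r3]
    push_cast
    rw [r2]
    linear_combination (c * (M : ℂ)) * keyM
  have hmonic : ((X - C a) ^ 2 : ℂ[X]).Monic := (monic_X_sub_C a).pow 2
  have hdvd : ((X - C a) ^ 2 : ℂ[X]) ∣ P := by
    rcases eq_or_ne P 0 with h | h
    · simp [h]
    · have h2 : 1 < P.rootMultiplicity a :=
        (Polynomial.one_lt_rootMultiplicity_iff_isRoot h).2 ⟨hroot, hroot'⟩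
      exact dvd_trans (pow_dvd_pow _ h2) (P.pow_rootMultiplicity_dvd a)
  set Q : ℂ[X] := P /ₘ ((X - C a) ^ 2) with hQdef
  have hPQ : P = (X - C a) ^ 2 * Q := by
    conv_lhs => rw [← modByMonic_add_div P ((X - C a) ^ 2)]
    rw [(Polynomial.modByMonic_eq_zero_iff_dvd hmonic).2 hdvd, zero_add]
  have hPdeg : P.natDegree ≤ 2 * M + 1 := by
    rw [hPdef]
    compute_degree
    all_goals omega
  have hQdeg : Q.natDegree < 2 * M := by
    have h1 := Polynomial.natDegree_divByMonic P hmonic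
    have h2 : ((X - C a) ^ 2 : ℂ[X]).natDegree = 2 := by
      simp [natDegree_pow, natDegree_X_sub_C]
    rw [← hQdef, h2] at h1
    omega
  refine ⟨fun ℓ => if ℓ ∈ Finset.Icc (1 - μ) μ then Q.coeff (ℓ + μ - 1).toNat else 0,
    fun ℓ hℓ => ?_, fun y hy0 hya => ?_⟩
  · beta_reduce
    rw [if_neg]
    simp only [Finset.mem_Icc]
    omega
  · -- main evaluation
    have hya' : y - a ≠ 0 := sub_ne_zero.mpr hya
    have hyM : (y : ℂ) ^ M' ≠ 0 := pow_ne_zero _ hy0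
    -- P at y
    have hPy : P.eval y = y ^ M' * (a * y * g y) := by
      rw [hg y hy0]
      simp only [hPdef, eval_mul, eval_add, eval_sub, eval_pow, eval_C, eval_X, eval_one]
      rw [show lam ^ (-(k : ℤ)) = a⁻¹ from by rw [ha, ← zpow_neg],
        show (y : ℂ) ^ μ = y ^ M from by rw [← hM, zpow_natCast],
        show (y : ℂ) ^ (-μ) = (y ^ M)⁻¹ from by rw [← hM, ← zpow_natCast, ← zpow_neg],
        hμM]
      have hyMM : (y : ℂ) ^ M ≠ 0 := pow_ne_zero _ hy0
      field_simp
      ring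
    have hE : y ^ M' * (a * y * g y) = (y - a) ^ 2 * Q.eval y := by
      rw [← hPy, hPQ]
      simp
    have hL : a * y * g y / (y - a) ^ 2 = Q.eval y / y ^ M' := by
      rw [div_eq_div_iff (pow_ne_zero 2 hya') hyM]
      linear_combination hE
    rw [hL, Polynomial.eval_eq_sum_range' hQdeg y]
    -- now reindex the sum
    rw [Finset.sum_div]
    refine Finset.sum_nbij' (i := fun j : ℕ => (j : ℤ) + 1 - μ)
      (j := fun ℓ : ℤ => (ℓ + μ - 1).toNat) ?_ ?_ ?_ ?_ ?_
    · intro j hj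
      simp only [Finset.mem_range] at hj
      simp only [Finset.mem_Icc]
      omega
    · intro ℓ hℓ
      simp only [Finset.mem_Icc] at hℓ
      simp only [Finset.mem_range]
      omega
    · intro j hj; simp only [Finset.mem_range] at hj; beta_reduce; omega
    · intro ℓ hℓ; simp only [Finset.mem_Icc] at hℓ; beta_reduce; omega
    · intro j hj
      simp only [Finset.mem_range] at hj
      beta_reduce
      rw [if_pos (by simp only [Finset.mem_Icc]; omega)]
      rw [show ((j : ℤ) + 1 - μ + μ - 1).toNat = j from by omega]
      rw [div_eq_mul_inv, mul_assoc]
      congr 1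
      rw [show ((j:ℤ) + 1 - μ) = (j : ℤ) - (M' : ℤ) from by omega,
        zpow_sub₀ hy0, zpow_natCast, zpow_natCast, div_eq_mul_inv]
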